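/- Let A ∈ ℝ^{m×n}, b ∈ ℝ^m, and let 𝒢 ⊆ ℝ^n be a nonempty closed convex set. Let 0 < λ₁ < λ₂, and for i ∈ {1,2} let gᵢ ∈ 𝒢 with gᵢ ≠ 0 be a minimizer of ‖Ag − b‖² + λᵢ‖g‖² over 𝒢. Define ρᵢ := λᵢ·√(‖gᵢ‖² + 1) / ‖Agᵢ − b‖ if Agᵢ ≠ b, and ρᵢ := λᵢ·√(‖gᵢ‖² + 1) otherwise. Then ρ₁ < ρ₂. -/

import Mathlib

set_option maxHeartbeats 1000000

open Matrix

/-- Euclidean norm of a vector in `ℝ^n`. -/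
noncomputable def enorm {n : ℕ} (x : Fin n → ℝ) : ℝ := Real.sqrt (∑ i, x i ^ 2)

lemma enorm_sq {k : ℕ} (x : Fin k → ℝ) : (_root_.enorm x) ^ 2 = ∑ i, x i ^ 2 :=
  Real.sq_sqrt (Finset.sum_nonneg fun i _ => sq_nonneg (x i))

lemma enorm_pos_of_sum {k : ℕ} {x : Fin k → ℝ} (h : 0 < ∑ i, x i ^ 2) :
    0 < _root_.enorm x := Real.sqrt_pos.mpr h

lemma enorm_nonneg {k : ℕ} (x : Fin k → ℝ) : 0 ≤ _root_.enorm x := Real.sqrt_nonneg _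

lemma sum_sq_pos_of_ne_zero {k : ℕ} {x : Fin k → ℝ} (hx : x ≠ 0) :
    0 < ∑ i, x i ^ 2 := by
  rcases Function.ne_iff.mp hx with ⟨i, hi⟩
  have h1 : 0 < x i ^ 2 := pow_two_pos_of_ne_zero hi
  exact lt_of_lt_of_le h1
    (Finset.single_le_sum (fun j _ => sq_nonneg (x j)) (Finset.mem_univ i))

lemma expand_sum {k : ℕ} (x y : Fin k → ℝ) (t : ℝ) :
    ∑ i, (x i + t * y i) ^ 2
      = (∑ i, x i ^ 2) + 2 * t * (∑ i, x i * y i) + t ^ 2 * (∑ i, y i ^ 2) := by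
  rw [Finset.mul_sum, Finset.mul_sum, ← Finset.sum_add_distrib, ← Finset.sum_add_distrib]
  exact Finset.sum_congr rfl fun i _ => by ring

lemma slope_nonneg (e K : ℝ)
    (h : ∀ t : ℝ, 0 < t → t ≤ 1 → 0 ≤ 2 * t * e + t ^ 2 * K) : 0 ≤ e := by
  by_contra hc
  push_neg at hc
  have h1 := h 1 one_pos le_rfl
  have hKpos : 0 < K := by nlinarith
  have ht : 0 < -e / K := div_pos (by linarith) hKpos
  have ht1 : -e / K ≤ 1 := by rw [div_le_one hKpos]; nlinarith
  have h2 := h _ ht ht1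
  have hident : (-e / K) ^ 2 * K = (-e / K) * (-e) := by
    field_simp
  have hprod : 0 < (-e / K) * (-e) := mul_pos ht (by linarith)
  nlinarith [h2, hident, hprod]

lemma core_ineq (x w mm tt c D : ℝ) (hx : 0 < x) (hxw : x < w)
    (ht : 0 < tt) (htm : tt < mm) (hc : 0 ≤ c) (hD : 0 < D) :
    x ^ 2 * (D + mm ^ 2) * (c + w ^ 2) * tt ^ 2
      < w ^ 2 * (D + tt ^ 2) * (c + x ^ 2) * mm ^ 2 := by
  have hw : 0 < w := hx.trans hxw
  have hsq1 : x ^ 2 ≤ w ^ 2 := by nlinarith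
  have hsq2 : tt ^ 2 < mm ^ 2 := by nlinarith
  have h1 : x ^ 2 * (c + w ^ 2) ≤ w ^ 2 * (c + x ^ 2) := by
    nlinarith [mul_nonneg hc (sub_nonneg.mpr hsq1)]
  have h2 : tt ^ 2 * (D + mm ^ 2) < mm ^ 2 * (D + tt ^ 2) := by
    nlinarith [mul_pos hD (sub_pos.mpr hsq2)]
  have hA : 0 < x ^ 2 * (c + w ^ 2) := by positivity
  have hB : 0 ≤ tt ^ 2 * (D + mm ^ 2) := by positivity
  calc x ^ 2 * (D + mm ^ 2) * (c + w ^ 2) * tt ^ 2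
      = (x ^ 2 * (c + w ^ 2)) * (tt ^ 2 * (D + mm ^ 2)) := by ring
    _ < (w ^ 2 * (c + x ^ 2)) * (mm ^ 2 * (D + tt ^ 2)) :=
        mul_lt_mul' h1 h2 hB (lt_of_lt_of_le hA h1)
    _ = w ^ 2 * (D + tt ^ 2) * (c + x ^ 2) * mm ^ 2 := by ring

lemma main_ineq (lam1 lam2 F1 N1 P Q U S : ℝ)
    (hl1 : 0 < lam1) (hl12 : lam1 < lam2)
    (hU : 0 < U) (hS : 0 < S) (hP : 0 < P) (hQS : Q + S < 0)
    (hA : lam1 * (-Q) ≤ P) (hB : U + P ≤ lam2 * (-(Q + S)))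
    (hCS1 : P ^ 2 ≤ F1 * U) (hCS2 : Q ^ 2 ≤ N1 * S) :
    lam1 ^ 2 * (N1 + 1) * (F1 + 2 * P + U) < lam2 ^ 2 * ((N1 + 2 * Q + S) + 1) * F1 := by
  have hl2 : 0 < lam2 := hl1.trans hl12
  have hQ : Q < 0 := by linarith
  have hm : 0 < -Q := by linarith
  have htpos : 0 < -(Q + S) := by linarith
  have htm : -(Q + S) < -Q := by linarith
  have hF1 : 0 < F1 := by
    by_contra h
    push_neg at h
    have h1 : F1 * U ≤ 0 := mul_nonpos_of_nonpos_of_nonneg h hU.le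
    nlinarith [mul_pos hP hP]
  have hN1 : 0 ≤ N1 := by
    by_contra h
    push_neg at h
    have h1 : N1 * S < 0 := mul_neg_of_neg_of_pos h hS
    linarith [sq_nonneg Q]
  have hD : 0 < S * (N1 + 1) - Q ^ 2 := by
    have h1 : S * (N1 + 1) = N1 * S + S := by ring
    linarith
  have key0 := core_ineq P (U + P) (-Q) (-(Q + S)) (F1 * U - P ^ 2) (S * (N1 + 1) - Q ^ 2)
    hP (by linarith) htpos htm (by linarith) hD
  have eL : P ^ 2 * ((S * (N1 + 1) - Q ^ 2) + (-Q) ^ 2) * ((F1 * U - P ^ 2) + (U + P) ^ 2)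
        * (-(Q + S)) ^ 2
      = P ^ 2 * ((S * (N1 + 1)) * (U * (F1 + 2 * P + U)) * (Q + S) ^ 2) := by ring
  have eR : (U + P) ^ 2 * ((S * (N1 + 1) - Q ^ 2) + (-(Q + S)) ^ 2)
        * ((F1 * U - P ^ 2) + P ^ 2) * (-Q) ^ 2
      = (U + P) ^ 2 * ((S * ((N1 + 2 * Q + S) + 1)) * (U * F1) * Q ^ 2) := by ring
  rw [eL, eR] at key0
  have h0A : 0 ≤ lam1 * (-Q) := mul_nonneg hl1.le hm.le
  have h0B : 0 ≤ U + P := by linarith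
  have hx2 : lam1 ^ 2 * Q ^ 2 ≤ P ^ 2 := by
    nlinarith [mul_self_le_mul_self h0A hA]
  have hw2 : (U + P) ^ 2 ≤ lam2 ^ 2 * (Q + S) ^ 2 := by
    nlinarith [mul_self_le_mul_self h0B hB]
  have hF2pos : 0 < F1 + 2 * P + U := by linarith
  have hN2pos : 0 < S * ((N1 + 2 * Q + S) + 1) := by
    have h1 : S * ((N1 + 2 * Q + S) + 1) = (S * (N1 + 1) - Q ^ 2) + (Q + S) ^ 2 := by ring
    have h2 : 0 ≤ (Q + S) ^ 2 := sq_nonneg _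
    linarith
  have hQsq : 0 < Q ^ 2 := pow_two_pos_of_ne_zero (by linarith)
  have hQSsq : 0 < (Q + S) ^ 2 := pow_two_pos_of_ne_zero (by linarith)
  have hM : 0 < S * U * Q ^ 2 * (Q + S) ^ 2 := by positivity
  have hZ1 : 0 ≤ (S * (N1 + 1)) * (U * (F1 + 2 * P + U)) * (Q + S) ^ 2 :=
    mul_nonneg (mul_nonneg (mul_nonneg hS.le (by linarith)) (mul_nonneg hU.le hF2pos.le))
      (sq_nonneg _)
  have hZ2 : 0 ≤ (S * ((N1 + 2 * Q + S) + 1)) * (U * F1) * Q ^ 2 :=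
    mul_nonneg (mul_nonneg hN2pos.le (mul_nonneg hU.le hF1.le)) (sq_nonneg _)
  have chain : lam1 ^ 2 * (N1 + 1) * (F1 + 2 * P + U) * (S * U * Q ^ 2 * (Q + S) ^ 2)
      < lam2 ^ 2 * ((N1 + 2 * Q + S) + 1) * F1 * (S * U * Q ^ 2 * (Q + S) ^ 2) := by
    calc lam1 ^ 2 * (N1 + 1) * (F1 + 2 * P + U) * (S * U * Q ^ 2 * (Q + S) ^ 2)
        = (lam1 ^ 2 * Q ^ 2) * ((S * (N1 + 1)) * (U * (F1 + 2 * P + U)) * (Q + S) ^ 2) := by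
          ring
      _ ≤ P ^ 2 * ((S * (N1 + 1)) * (U * (F1 + 2 * P + U)) * (Q + S) ^ 2) :=
          mul_le_mul_of_nonneg_right hx2 hZ1
      _ < (U + P) ^ 2 * ((S * ((N1 + 2 * Q + S) + 1)) * (U * F1) * Q ^ 2) := key0
      _ ≤ (lam2 ^ 2 * (Q + S) ^ 2) * ((S * ((N1 + 2 * Q + S) + 1)) * (U * F1) * Q ^ 2) :=
          mul_le_mul_of_nonneg_right hw2 hZ2
      _ = lam2 ^ 2 * ((N1 + 2 * Q + S) + 1) * F1 * (S * U * Q ^ 2 * (Q + S) ^ 2) := by ring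
  exact lt_of_mul_lt_mul_right chain hM.le

/-- Monotonicity claim of Theorem 2 of the paper: the implicit uncertainty-set bound
`ρ_u` of eq. (34) is strictly increasing in the quadratic regularization weight. -/
theorem quadratic_regularization_bound_monotone
    (m n : ℕ) (A : Matrix (Fin m) (Fin n) ℝ) (b : Fin m → ℝ)
    (𝒢 : Set (Fin n → ℝ)) (h𝒢ne : 𝒢.Nonempty) (h𝒢cl : IsClosed 𝒢) (h𝒢cv : Convex ℝ 𝒢)
    (lam1 lam2 : ℝ) (hlam1 : 0 < lam1) (hlam12 : lam1 < lam2)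
    (g1 g2 : Fin n → ℝ) (hg1 : g1 ∈ 𝒢) (hg2 : g2 ∈ 𝒢)
    (hg1ne : g1 ≠ 0) (hg2ne : g2 ≠ 0)
    (hmin1 : ∀ g ∈ 𝒢,
      (_root_.enorm (A.mulVec g1 - b)) ^ 2 + lam1 * (_root_.enorm g1) ^ 2
        ≤ (_root_.enorm (A.mulVec g - b)) ^ 2 + lam1 * (_root_.enorm g) ^ 2)
    (hmin2 : ∀ g ∈ 𝒢,
      (_root_.enorm (A.mulVec g2 - b)) ^ 2 + lam2 * (_root_.enorm g2) ^ 2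
        ≤ (_root_.enorm (A.mulVec g - b)) ^ 2 + lam2 * (_root_.enorm g) ^ 2)
    (ρ1 ρ2 : ℝ)
    (hρ1a : A.mulVec g1 ≠ b →
      ρ1 = lam1 * Real.sqrt ((_root_.enorm g1) ^ 2 + 1) / _root_.enorm (A.mulVec g1 - b))
    (hρ1b : A.mulVec g1 = b → ρ1 = lam1 * Real.sqrt ((_root_.enorm g1) ^ 2 + 1))
    (hρ2a : A.mulVec g2 ≠ b →
      ρ2 = lam2 * Real.sqrt ((_root_.enorm g2) ^ 2 + 1) / _root_.enorm (A.mulVec g2 - b))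
    (hρ2b : A.mulVec g2 = b → ρ2 = lam2 * Real.sqrt ((_root_.enorm g2) ^ 2 + 1)) :
    ρ1 < ρ2 := by
  have hlam2 : 0 < lam2 := hlam1.trans hlam12
  by_cases hgeq : g1 = g2
  · -- degenerate case: both minimizers coincide
    subst hgeq
    by_cases hb1 : A.mulVec g1 = b
    · rw [hρ1b hb1, hρ2b hb1]
      exact mul_lt_mul_of_pos_right hlam12 (Real.sqrt_pos.mpr (by positivity))
    · rw [hρ1a hb1, hρ2a hb1]
      have hr : A.mulVec g1 - b ≠ 0 := sub_ne_zero_of_ne hb1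
      have hf : 0 < _root_.enorm (A.mulVec g1 - b) :=
        enorm_pos_of_sum (sum_sq_pos_of_ne_zero hr)
      have hc : 0 < Real.sqrt ((_root_.enorm g1) ^ 2 + 1) := Real.sqrt_pos.mpr (by positivity)
      have hlt : lam1 * Real.sqrt ((_root_.enorm g1) ^ 2 + 1)
          < lam2 * Real.sqrt ((_root_.enorm g1) ^ 2 + 1) := mul_lt_mul_of_pos_right hlam12 hc
      rw [div_lt_div_iff₀ hf hf]
      exact mul_lt_mul_of_pos_right hlt hf
  · -- main case : g1 ≠ g2
    set r1 : Fin m → ℝ := A.mulVec g1 - b with hr1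
    set r2 : Fin m → ℝ := A.mulVec g2 - b with hr2
    have hS : 0 < ∑ i, (g2 i - g1 i) ^ 2 := by
      have hne : (g2 - g1) ≠ 0 := sub_ne_zero_of_ne (Ne.symm hgeq)
      have h := sum_sq_pos_of_ne_zero hne
      calc (0:ℝ) < ∑ i, (g2 - g1) i ^ 2 := h
        _ = ∑ i, (g2 i - g1 i) ^ 2 := Finset.sum_congr rfl fun i _ => by
              rw [Pi.sub_apply]
    have hres1 : ∀ t : ℝ, ∀ i, (A.mulVec ((1 - t) • g1 + t • g2) - b) i
        = r1 i + t * (r2 i - r1 i) := by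
      intro t i
      rw [Matrix.mulVec_add, Matrix.mulVec_smul, Matrix.mulVec_smul]
      simp only [hr1, hr2, Pi.add_apply, Pi.sub_apply, Pi.smul_apply, smul_eq_mul]
      ring
    have hres2 : ∀ t : ℝ, ∀ i, (A.mulVec ((1 - t) • g2 + t • g1) - b) i
        = r2 i + t * (r1 i - r2 i) := by
      intro t i
      rw [Matrix.mulVec_add, Matrix.mulVec_smul, Matrix.mulVec_smul]
      simp only [hr1, hr2, Pi.add_apply, Pi.sub_apply, Pi.smul_apply, smul_eq_mul]
      ring
    have hvec1 : ∀ t : ℝ, ∀ i, ((1 - t) • g1 + t • g2) i = g1 i + t * (g2 i - g1 i) := by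
      intro t i
      simp only [Pi.add_apply, Pi.smul_apply, smul_eq_mul]
      ring
    have hvec2 : ∀ t : ℝ, ∀ i, ((1 - t) • g2 + t • g1) i = g2 i + t * (g1 i - g2 i) := by
      intro t i
      simp only [Pi.add_apply, Pi.smul_apply, smul_eq_mul]
      ring
    have hsum1 : ∀ t : ℝ, (_root_.enorm (A.mulVec ((1 - t) • g1 + t • g2) - b)) ^ 2
        = (∑ i, r1 i ^ 2) + 2 * t * (∑ i, r1 i * (r2 i - r1 i))
          + t ^ 2 * (∑ i, (r2 i - r1 i) ^ 2) := by
      intro t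
      rw [enorm_sq]
      rw [Finset.sum_congr rfl fun i _ => by rw [hres1 t i]]
      exact expand_sum r1 (fun i => r2 i - r1 i) t
    have hsum2 : ∀ t : ℝ, (_root_.enorm (A.mulVec ((1 - t) • g2 + t • g1) - b)) ^ 2
        = (∑ i, r2 i ^ 2) + 2 * t * (∑ i, r2 i * (r1 i - r2 i))
          + t ^ 2 * (∑ i, (r1 i - r2 i) ^ 2) := by
      intro t
      rw [enorm_sq]
      rw [Finset.sum_congr rfl fun i _ => by rw [hres2 t i]]
      exact expand_sum r2 (fun i => r1 i - r2 i) t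
    have hvsum1 : ∀ t : ℝ, (_root_.enorm ((1 - t) • g1 + t • g2)) ^ 2
        = (∑ i, g1 i ^ 2) + 2 * t * (∑ i, g1 i * (g2 i - g1 i))
          + t ^ 2 * (∑ i, (g2 i - g1 i) ^ 2) := by
      intro t
      rw [enorm_sq]
      rw [Finset.sum_congr rfl fun i _ => by rw [hvec1 t i]]
      exact expand_sum g1 (fun i => g2 i - g1 i) t
    have hvsum2 : ∀ t : ℝ, (_root_.enorm ((1 - t) • g2 + t • g1)) ^ 2
        = (∑ i, g2 i ^ 2) + 2 * t * (∑ i, g2 i * (g1 i - g2 i))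
          + t ^ 2 * (∑ i, (g1 i - g2 i) ^ 2) := by
      intro t
      rw [enorm_sq]
      rw [Finset.sum_congr rfl fun i _ => by rw [hvec2 t i]]
      exact expand_sum g2 (fun i => g1 i - g2 i) t
    have hF1 : (_root_.enorm r1) ^ 2 = ∑ i, r1 i ^ 2 := enorm_sq r1
    have hF2 : (_root_.enorm r2) ^ 2 = ∑ i, r2 i ^ 2 := enorm_sq r2
    have hN1 : (_root_.enorm g1) ^ 2 = ∑ i, g1 i ^ 2 := enorm_sq g1
    have hN2 : (_root_.enorm g2) ^ 2 = ∑ i, g2 i ^ 2 := enorm_sq g2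
    -- first-order optimality of g1 (direction g2)
    have hqA : 0 ≤ (∑ i, r1 i * (r2 i - r1 i)) + lam1 * (∑ i, g1 i * (g2 i - g1 i)) := by
      apply slope_nonneg _ ((∑ i, (r2 i - r1 i) ^ 2) + lam1 * (∑ i, (g2 i - g1 i) ^ 2))
      intro t ht0 ht1
      have hmem : (1 - t) • g1 + t • g2 ∈ 𝒢 :=
        h𝒢cv hg1 hg2 (by linarith) ht0.le (by ring)
      have h := hmin1 _ hmem
      rw [hsum1 t, hvsum1 t, hF1, hN1] at h
      nlinarith [h]
    -- first-order optimality of g2 (direction g1)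
    have hqB : 0 ≤ (∑ i, r2 i * (r1 i - r2 i)) + lam2 * (∑ i, g2 i * (g1 i - g2 i)) := by
      apply slope_nonneg _ ((∑ i, (r1 i - r2 i) ^ 2) + lam2 * (∑ i, (g1 i - g2 i) ^ 2))
      intro t ht0 ht1
      have hmem : (1 - t) • g2 + t • g1 ∈ 𝒢 :=
        h𝒢cv hg2 hg1 (by linarith) ht0.le (by ring)
      have h := hmin2 _ hmem
      rw [hsum2 t, hvsum2 t, hF2, hN2] at h
      nlinarith [h]
    -- rewrite the reversed-direction sums
    have eP2 : ∑ i, r2 i * (r1 i - r2 i)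
        = -(∑ i, r1 i * (r2 i - r1 i)) - ∑ i, (r2 i - r1 i) ^ 2 := by
      rw [Finset.sum_congr rfl (fun i _ =>
        (by ring : r2 i * (r1 i - r2 i)
          = -(r1 i * (r2 i - r1 i)) - (r2 i - r1 i) ^ 2)),
        Finset.sum_sub_distrib, Finset.sum_neg_distrib]
    have eQ2 : ∑ i, g2 i * (g1 i - g2 i)
        = -(∑ i, g1 i * (g2 i - g1 i)) - ∑ i, (g2 i - g1 i) ^ 2 := by
      rw [Finset.sum_congr rfl (fun i _ =>
        (by ring : g2 i * (g1 i - g2 i)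
          = -(g1 i * (g2 i - g1 i)) - (g2 i - g1 i) ^ 2)),
        Finset.sum_sub_distrib, Finset.sum_neg_distrib]
    rw [eP2, eQ2] at hqB
    -- Cauchy–Schwarz
    have hCS1 : (∑ i, r1 i * (r2 i - r1 i)) ^ 2
        ≤ (∑ i, r1 i ^ 2) * (∑ i, (r2 i - r1 i) ^ 2) := by
      simpa using Finset.sum_mul_sq_le_sq_mul_sq Finset.univ r1 (fun i => r2 i - r1 i)
    have hCS2 : (∑ i, g1 i * (g2 i - g1 i)) ^ 2
        ≤ (∑ i, g1 i ^ 2) * (∑ i, (g2 i - g1 i) ^ 2) := by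
      simpa using Finset.sum_mul_sq_le_sq_mul_sq Finset.univ g1 (fun i => g2 i - g1 i)
    -- identities for the second point
    have eF2 : (∑ i, r2 i ^ 2)
        = (∑ i, r1 i ^ 2) + 2 * (∑ i, r1 i * (r2 i - r1 i)) + (∑ i, (r2 i - r1 i) ^ 2) := by
      rw [Finset.sum_congr rfl (fun i _ =>
        (by ring : r2 i ^ 2
          = r1 i ^ 2 + 2 * (r1 i * (r2 i - r1 i)) + (r2 i - r1 i) ^ 2)),
        Finset.sum_add_distrib, Finset.sum_add_distrib, ← Finset.mul_sum]
    have eN2 : (∑ i, g2 i ^ 2)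
        = (∑ i, g1 i ^ 2) + 2 * (∑ i, g1 i * (g2 i - g1 i)) + (∑ i, (g2 i - g1 i) ^ 2) := by
      rw [Finset.sum_congr rfl (fun i _ =>
        (by ring : g2 i ^ 2
          = g1 i ^ 2 + 2 * (g1 i * (g2 i - g1 i)) + (g2 i - g1 i) ^ 2)),
        Finset.sum_add_distrib, Finset.sum_add_distrib, ← Finset.mul_sum]
    -- abbreviations
    set P := ∑ i, r1 i * (r2 i - r1 i) with hPdef
    set Q := ∑ i, g1 i * (g2 i - g1 i) with hQdef
    set Uq := ∑ i, (r2 i - r1 i) ^ 2 with hUdef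
    set Sq := ∑ i, (g2 i - g1 i) ^ 2 with hSdef
    set F1s := ∑ i, r1 i ^ 2 with hF1def
    set F2s := ∑ i, r2 i ^ 2 with hF2def
    set N1s := ∑ i, g1 i ^ 2 with hN1def
    set N2s := ∑ i, g2 i ^ 2 with hN2def
    have hUnn : 0 ≤ Uq := Finset.sum_nonneg fun i _ => sq_nonneg _
    -- sign facts
    have hU : 0 < Uq := by
      rcases lt_or_eq_of_le hUnn with h | h
      · exact h
      · exfalso
        have hP0 : P = 0 := by
          rw [← h, mul_zero] at hCS1
          have h2 : P ^ 2 = 0 := le_antisymm hCS1 (sq_nonneg P)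
          exact pow_eq_zero_iff (two_ne_zero) |>.mp h2
        rw [hP0] at hqA hqB
        rw [← h] at hqB
        have hQnn : 0 ≤ Q := by
          by_contra hq
          push_neg at hq
          nlinarith [mul_neg_of_pos_of_neg hlam1 hq]
        have h2 : 0 ≤ -Q - Sq := by
          by_contra hq
          push_neg at hq
          nlinarith [mul_neg_of_pos_of_neg hlam2 hq]
        linarith
    have hQneg : Q < 0 := by
      by_contra h
      push_neg at h
      have t1 : 0 ≤ (lam2 - lam1) * Q := mul_nonneg (sub_pos.mpr hlam12).le h
      nlinarith [hqA, hqB, t1, mul_pos hlam2 hS, hU]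
    have hP : 0 < P := by
      nlinarith [mul_pos hlam1 (neg_pos.mpr hQneg), hqA]
    have hQS : Q + Sq < 0 := by
      by_contra h
      push_neg at h
      nlinarith [hqB, hP, hU, mul_nonneg hlam2.le h]
    have hA' : lam1 * (-Q) ≤ P := by nlinarith [hqA]
    have hB' : Uq + P ≤ lam2 * (-(Q + Sq)) := by nlinarith [hqB]
    -- the main algebraic inequality
    have final := main_ineq lam1 lam2 F1s N1s P Q Uq Sq hlam1 hlam12 hU hS hP hQS hA' hB'
      hCS1 hCS2
    have eF2' : F1s + 2 * P + Uq = F2s := by rw [eF2]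
    have eN2' : (N1s + 2 * Q + Sq) + 1 = N2s + 1 := by rw [eN2]
    rw [eF2', eN2'] at final
    -- final : lam1^2 * (N1s+1) * F2s < lam2^2 * (N2s+1) * F1s
    have hF1pos : 0 < F1s := by
      by_contra h
      push_neg at h
      have h1 : F1s * Uq ≤ 0 := mul_nonpos_of_nonpos_of_nonneg h hU.le
      nlinarith [mul_pos hP hP]
    have hF2pos : 0 < F2s := by rw [← eF2']; linarith
    have hb1 : A.mulVec g1 ≠ b := by
      intro heq
      have h0 : F1s = 0 := by
        rw [hF1def]
        apply Finset.sum_eq_zero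
        intro i _
        rw [hr1, heq, sub_self]
        simp
      linarith
    have hb2 : A.mulVec g2 ≠ b := by
      intro heq
      have h0 : F2s = 0 := by
        rw [hF2def]
        apply Finset.sum_eq_zero
        intro i _
        rw [hr2, heq, sub_self]
        simp
      linarith
    rw [hρ1a hb1, hρ2a hb2]
    have her1 : 0 < _root_.enorm r1 := by
      apply enorm_pos_of_sum
      rw [← hF1def]
      exact hF1pos
    have her2 : 0 < _root_.enorm r2 := by
      apply enorm_pos_of_sum
      rw [← hF2def]
      exact hF2pos
    rw [div_lt_div_iff₀ her1 her2]
    apply lt_of_pow_lt_pow_left₀ 2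
      (mul_nonneg (mul_nonneg hlam2.le (Real.sqrt_nonneg _)) (enorm_nonneg r1))
    have lsq : (lam1 * Real.sqrt ((_root_.enorm g1) ^ 2 + 1) * _root_.enorm r2) ^ 2
        = lam1 ^ 2 * (N1s + 1) * F2s := by
      rw [mul_pow, mul_pow, Real.sq_sqrt (by positivity), hN1, hF2]
    have rsq : (lam2 * Real.sqrt ((_root_.enorm g2) ^ 2 + 1) * _root_.enorm r1) ^ 2
        = lam2 ^ 2 * (N2s + 1) * F1s := by
      rw [mul_pow, mul_pow, Real.sq_sqrt (by positivity), hN2, hF1]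
    rw [lsq, rsq]
    exact final
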